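/- arXiv:0910.2262 — 2 statements merged into one kernel-verified Lean document; each statement's English description precedes it below -/
import Mathlib

section
/- Let 𝔅 be a Banach algebra such that for every n ∈ ℕ, the formal matrix multiplication Mₙ(𝔅) × Mₙ(𝔅) → Mₙ(𝔅) is bounded by a constant C ≥ 1 independent of n, where Mₙ(𝔅) carries norms making the natural inclusions and the identification Mₙ(Mₘ(𝔅)) ≅ M_{nm}(𝔅) isometric (i.e. an operator space matrix norm structure). Then the multiplication map m : 𝔅 ⊗ 𝔅 → 𝔅 extends to a completely bounded map on the Haagerup tensor product 𝔅 ⊗^h 𝔅 with cb-norm at most C. -/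
/-- Padding of a rectangular matrix with zeros into a larger rectangular matrix. -/
def Matrix.pad {B : Type*} [Zero B] {m n : ℕ} (m' n' : ℕ)
    (A : Matrix (Fin m) (Fin n) B) : Matrix (Fin m') (Fin n') B :=
  Matrix.of fun i j =>
    if h : (i : ℕ) < m ∧ (j : ℕ) < n then A ⟨i, h.1⟩ ⟨j, h.2⟩ else 0

theorem sum_pad_aux {B : Type*} [AddCommMonoid B] {k n : ℕ} (hk : k ≤ n)
    (g : Fin k → B) :
    (∑ l : Fin n, if h : (l : ℕ) < k then g ⟨l, h⟩ else 0) = ∑ l : Fin k, g l := by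
  have e1 := Fin.sum_univ_eq_sum_range (fun i => if h : i < k then g ⟨i, h⟩ else 0) n
  have e2 := Fin.sum_univ_eq_sum_range (fun i => if h : i < k then g ⟨i, h⟩ else 0) k
  rw [e1, ← Finset.sum_subset (Finset.range_subset_range.2 hk)
      (fun i _ hi => dif_neg (Finset.mem_range.not.1 hi)), ← e2]
  exact Finset.sum_congr rfl fun l _ => by rw [dif_pos l.isLt]

/-- Let `𝔅` be a Banach algebra carrying an operator-space-like family of
matrix norms `N m n` on the rectangular matrix spaces `M_{m,n}(𝔅)` (the norm on `M_{1,1}(𝔅)`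
is the norm of `𝔅`, and the natural inclusions, i.e. paddings by zeros, are isometric).
If formal matrix multiplication `Mₙ(𝔅) × Mₙ(𝔅) → Mₙ(𝔅)` is bounded by `C ≥ 1` for every
`n`, then the multiplication `m : 𝔅 ⊗ 𝔅 → 𝔅` extends to a completely bounded map on the
Haagerup tensor product `𝔅 ⊗^h 𝔅` with cb-norm at most `C`: for every representation of a
tensor as a row matrix `a` times a column matrix `b`, `‖Σ_k aₖ bₖ‖ ≤ C ‖a‖ ‖b‖`, so that
`‖m(u)‖ ≤ C ‖u‖_h` for every `u ∈ 𝔅 ⊗ 𝔅`. -/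
theorem haagerup_mult_bound (B : Type*) [NormedRing B] [NormedAlgebra ℂ B]
    [CompleteSpace B]
    (N : ∀ m n : ℕ, Matrix (Fin m) (Fin n) B → ℝ) (C : ℝ) (hC : 1 ≤ C)
    (h11 : ∀ b : B, N 1 1 (Matrix.of fun _ _ => b) = ‖b‖)
    (hpad : ∀ (m n m' n' : ℕ), m ≤ m' → n ≤ n' →
      ∀ A : Matrix (Fin m) (Fin n) B, N m' n' (A.pad m' n') = N m n A)
    (hmul : ∀ (n : ℕ) (A A' : Matrix (Fin n) (Fin n) B),
      N n n (A * A') ≤ C * N n n A * N n n A') :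
    ∀ (k : ℕ) (a : Matrix (Fin 1) (Fin k) B) (b : Matrix (Fin k) (Fin 1) B),
      ‖(a * b) 0 0‖ ≤ C * N 1 k a * N k 1 b := by
  intro k a b
  set n := max 1 k with hn
  have hk : k ≤ n := le_max_right _ _
  have h1 : (1 : ℕ) ≤ n := le_max_left _ _
  have key : (a.pad n n) * (b.pad n n)
      = (Matrix.of fun _ _ : Fin 1 => (a * b) 0 0).pad n n := by
    ext i j
    simp only [Matrix.mul_apply, Matrix.pad, Matrix.of_apply]
    by_cases hi : (i : ℕ) < 1
    · by_cases hj : (j : ℕ) < 1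
      · rw [dif_pos ⟨hi, hj⟩]
        have hi0 : (⟨(i : ℕ), hi⟩ : Fin 1) = 0 := Subsingleton.elim _ _
        have hj0 : (⟨(j : ℕ), hj⟩ : Fin 1) = 0 := Subsingleton.elim _ _
        rw [← sum_pad_aux hk (fun l => a 0 l * b l 0)]
        refine Finset.sum_congr rfl fun l _ => ?_
        by_cases hl : (l : ℕ) < k
        · rw [dif_pos ⟨hi, hl⟩, dif_pos ⟨hl, hj⟩, dif_pos hl, hi0, hj0]
        · have h2 : ¬((l : ℕ) < k ∧ (j : ℕ) < 1) := fun h => hl h.1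
          rw [dif_neg h2, mul_zero, dif_neg hl]
      · have h2 : ¬((i : ℕ) < 1 ∧ (j : ℕ) < 1) := fun h => hj h.2
        rw [dif_neg h2]
        refine Finset.sum_eq_zero fun l _ => ?_
        have h3 : ¬((l : ℕ) < k ∧ (j : ℕ) < 1) := fun h => hj h.2
        rw [dif_neg h3, mul_zero]
    · have h2 : ¬((i : ℕ) < 1 ∧ (j : ℕ) < 1) := fun h => hi h.1
      rw [dif_neg h2]
      refine Finset.sum_eq_zero fun l _ => ?_
      have h3 : ¬((i : ℕ) < 1 ∧ (l : ℕ) < k) := fun h => hi h.1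
      rw [dif_neg h3, zero_mul]
  have := hmul n (a.pad n n) (b.pad n n)
  rw [key, hpad 1 1 n n h1 h1, h11, hpad 1 k n n h1 hk, hpad k 1 n n hk h1] at this
  exact this
end

section
/- Let M₁, …, M_k be von Neumann algebras and n₁, …, n_k ∈ ℕ, and suppose each Mᵢ_* ⊗̂ B(E)-level product extends boundedly, i.e. each Mᵢ ⊗̄ CB(E) is a Banach algebra with multiplication bounded by Cᵢ. Then the direct sum (Mₙ₁(M₁) ⊕ ⋯ ⊕ M_{n_k}(M_k)) ⊗̄ CB(E) is a Banach algebra with multiplication bounded by max_i (n_i² · Cᵢ) — in particular, a subhomogeneous von Neumann algebra tensored with CB(E) admits a bounded (not necessarily contractive) extension of the multiplication. -/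
/-- Let `M₁, …, M_k` be von Neumann algebras and suppose each
`Bᵢ = Mᵢ ⊗̄ CB(E)` (for a reflexive operator space `E`) is a Banach algebra whose
multiplication `mulᵢ` is bounded by `Cᵢ`.  Via the identification
`M_{nᵢ}(Mᵢ) ⊗̄ CB(E) ≅ M_{nᵢ}(Mᵢ ⊗̄ CB(E)) = M_{nᵢ}(Bᵢ)`, equip `M_{nᵢ}(Bᵢ)` with any
norm `Nᵢ` dominating, and dominated up to the factor `nᵢ` by, the max-entry norm.
Then the ℓ^∞-direct sum `(M_{n₁}(M₁) ⊕ ⋯ ⊕ M_{n_k}(M_k)) ⊗̄ CB(E) = ⊕ᵢ M_{nᵢ}(Bᵢ)`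
is a Banach algebra with multiplication bounded by `max_i (nᵢ² Cᵢ)`: in particular a
subhomogeneous von Neumann algebra tensored with `CB(E)` admits a bounded (not
necessarily contractive) extension of the multiplication. -/
theorem subhomogeneous_tensor_banach_algebra
    (k : ℕ) (n : Fin k → ℕ) (B : Fin k → Type*)
    [∀ i, NormedAddCommGroup (B i)] [∀ i, NormedSpace ℂ (B i)] [∀ i, CompleteSpace (B i)]
    (mul : ∀ i, B i →L[ℂ] B i →L[ℂ] B i) (C : Fin k → ℝ) (hC : ∀ i, 0 ≤ C i)
    (hmul : ∀ i (a b : B i), ‖mul i a b‖ ≤ C i * ‖a‖ * ‖b‖)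
    (N : ∀ i, Matrix (Fin (n i)) (Fin (n i)) (B i) → ℝ)
    (hN0 : ∀ i A, 0 ≤ N i A)
    (hNdom : ∀ i (A : Matrix (Fin (n i)) (Fin (n i)) (B i)) (p q), ‖A p q‖ ≤ N i A)
    (hNbd : ∀ i (A : Matrix (Fin (n i)) (Fin (n i)) (B i)) (r : ℝ),
      (∀ p q, ‖A p q‖ ≤ r) → N i A ≤ (n i : ℝ) * r)
    (F G : ∀ i, Matrix (Fin (n i)) (Fin (n i)) (B i)) :
    (⨆ i, N i (Matrix.of fun p q => ∑ r : Fin (n i), mul i (F i p r) (G i r q)))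
      ≤ (⨆ i, ((n i : ℝ) ^ 2 * C i)) * (⨆ i, N i (F i)) * (⨆ i, N i (G i)) := by

  rcases isEmpty_or_nonempty (Fin k) with h | h
  · simp [Real.iSup_of_isEmpty]
  · have hb : ∀ (f : Fin k → ℝ), BddAbove (Set.range f) :=
      fun f => (Set.finite_range f).bddAbove
    have hCnn : 0 ≤ ⨆ i, ((n i : ℝ) ^ 2 * C i) :=
      le_ciSup_of_le (hb _) (Classical.arbitrary (Fin k))
        (mul_nonneg (by positivity) (hC _))
    have hFnn : 0 ≤ ⨆ i, N i (F i) :=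
      le_ciSup_of_le (hb _) (Classical.arbitrary _) (hN0 _ _)
    have hGnn : 0 ≤ ⨆ i, N i (G i) :=
      le_ciSup_of_le (hb _) (Classical.arbitrary _) (hN0 _ _)
    apply ciSup_le
    intro i
    have hentry : ∀ p q, ‖∑ r : Fin (n i), mul i (F i p r) (G i r q)‖
        ≤ (n i : ℝ) * (C i * N i (F i) * N i (G i)) := by
      intro p q
      calc ‖∑ r : Fin (n i), mul i (F i p r) (G i r q)‖
          ≤ ∑ r : Fin (n i), ‖mul i (F i p r) (G i r q)‖ := norm_sum_le _ _
        _ ≤ ∑ r : Fin (n i), C i * N i (F i) * N i (G i) := by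
            apply Finset.sum_le_sum
            intro r _
            calc ‖mul i (F i p r) (G i r q)‖ ≤ C i * ‖F i p r‖ * ‖G i r q‖ := hmul i _ _
              _ ≤ C i * N i (F i) * N i (G i) := by
                  apply mul_le_mul
                  · exact mul_le_mul_of_nonneg_left (hNdom i _ _ _) (hC i)
                  · exact hNdom i _ _ _
                  · exact norm_nonneg _
                  · exact mul_nonneg (hC i) (hN0 _ _)
        _ = (n i : ℝ) * (C i * N i (F i) * N i (G i)) := by
            simp [Finset.sum_const, mul_comm]
    have h1 : N i (Matrix.of fun p q => ∑ r : Fin (n i), mul i (F i p r) (G i r q))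
        ≤ ((n i : ℝ) ^ 2 * C i) * N i (F i) * N i (G i) := by
      have := hNbd i _ _ (fun p q => hentry p q)
      calc N i (Matrix.of fun p q => ∑ r : Fin (n i), mul i (F i p r) (G i r q))
          ≤ (n i : ℝ) * ((n i : ℝ) * (C i * N i (F i) * N i (G i))) := this
        _ = ((n i : ℝ) ^ 2 * C i) * N i (F i) * N i (G i) := by ring
    refine h1.trans ?_
    have hx : ((n i : ℝ) ^ 2 * C i) ≤ ⨆ j, ((n j : ℝ) ^ 2 * C j) := le_ciSup (f := fun j => ((n j : ℝ) ^ 2 * C j)) (hb _) i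
    have hy : N i (F i) ≤ ⨆ j, N j (F j) := le_ciSup (f := fun j => N j (F j)) (hb _) i
    have hz : N i (G i) ≤ ⨆ j, N j (G j) := le_ciSup (f := fun j => N j (G j)) (hb _) i
    apply mul_le_mul _ hz (hN0 _ _) (by positivity)
    exact mul_le_mul hx hy (hN0 _ _) hCnn
end
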